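/- Let (A,B) be a stage 3 game (satisfying the input assumptions of the type-two single column simulation) and let (A′,B′) be produced by the type-two single column simulation. Then every entry of A′ lies in {0,1}, and every row and every column of A′ contains at most three entries equal to 1. -/

import Mathlib

open Finset
open scoped Classical

/-- `(x, y)` is an `ε`-well-supported Nash equilibrium of the bimatrix game with
`nr` rows, `nc` columns and payoff matrices `A` (row player) and `B` (column player). -/
def IsWSNE (nr nc : ℕ) (A B : ℕ → ℕ → ℝ) (x y : ℕ → ℝ) (ε : ℝ) : Prop :=
  (∀ i, 0 ≤ x i) ∧ (∀ i, nr ≤ i → x i = 0) ∧ (∑ i ∈ range nr, x i = 1) ∧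
  (∀ j, 0 ≤ y j) ∧ (∀ j, nc ≤ j → y j = 0) ∧ (∑ j ∈ range nc, y j = 1) ∧
  (∀ i < nr, 0 < x i → ∀ i' < nr,
    ∑ j ∈ range nc, A i j * y j ≥ ∑ j ∈ range nc, A i' j * y j - ε) ∧
  (∀ j < nc, 0 < y j → ∀ j' < nc,
    ∑ i ∈ range nr, x i * B i j ≥ ∑ i ∈ range nr, x i * B i j' - ε)

/-- The column requirement of a stage 3 game: at most four non-zero entries, all in
`{1,2}`, with at most one `2`. -/
def Stage3Col (nr : ℕ) (col : ℕ → ℝ) : Prop :=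
  (∀ i < nr, col i ∈ ({0, 1, 2} : Set ℝ)) ∧
  ((range nr).filter fun i => col i ≠ 0).card ≤ 4 ∧
  ((range nr).filter fun i => col i = 2).card ≤ 1

/-- The row requirement of a stage 3 game: either (i) at most three entries `1`, or
(ii) a single `2` with at most one `1` (all remaining entries are `0`). -/
def Stage3Row (nc : ℕ) (row : ℕ → ℝ) : Prop :=
  ((∀ j < nc, row j = 0 ∨ row j = 1) ∧
    ((range nc).filter fun j => row j = 1).card ≤ 3) ∨
  ((((range nc).filter fun j => row j = 2).card = 1) ∧
    ((range nc).filter fun j => row j = 1).card ≤ 1 ∧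
    ∀ j < nc, row j ∈ ({0, 1, 2} : Set ℝ))

/-- `(A, B)` (with `nr` rows and `nc` columns) is a stage 3 game. -/
def Stage3Game (nr nc : ℕ) (A B : ℕ → ℕ → ℝ) : Prop :=
  (∀ j < nc, Stage3Col nr (fun i => A i j)) ∧
  (∀ i < nr, Stage3Row nc (fun j => A i j)) ∧
  (∀ i < nr, Stage3Col nc (fun j => B i j)) ∧
  (∀ j < nc, Stage3Row nr (fun i => B i j))

/-- Input assumptions of the type-two single column simulation: `(A, B)` is a
stage 3 game with at most `n` rows and columns, entries in `[0,2]`, every row and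
column with an entry `≥ 1`, whose columns containing a `2` or exactly four `1`s are
exactly the columns `j < k`, while every column `j ≥ k` contains at most three
`1`s and no `2`. -/
def Scs2Input (n nr nc k : ℕ) (A B : ℕ → ℕ → ℝ) : Prop :=
  nr ≤ n ∧ nc ≤ n ∧ k ≤ nc ∧
  Stage3Game nr nc A B ∧
  (∀ i < nr, ∀ j < nc, 0 ≤ A i j ∧ A i j ≤ 2) ∧
  (∀ i < nr, ∀ j < nc, 0 ≤ B i j ∧ B i j ≤ 2) ∧
  (∀ i < nr, ∃ j < nc, 1 ≤ A i j) ∧ (∀ j < nc, ∃ i < nr, 1 ≤ A i j) ∧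
  (∀ i < nr, ∃ j < nc, 1 ≤ B i j) ∧ (∀ j < nc, ∃ i < nr, 1 ≤ B i j) ∧
  (∀ j < k, ((range nr).filter fun i => A i j = 2).card = 1 ∨
            ((range nr).filter fun i => A i j = 1).card = 4) ∧
  (∀ j, k ≤ j → j < nc →
    (∀ i < nr, A i j ≠ 2) ∧ ((range nr).filter fun i => A i j = 1).card ≤ 3)

/-- The number of rows `r' < r` whose entry in column `j` of `A` equals `1`
(the rank of a `1`-entry of that column, used to define `encode`). -/
noncomputable def oneRank (A : ℕ → ℕ → ℝ) (j r : ℕ) : ℕ :=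
  ((range r).filter fun r' => A r' j = 1).card

/-- The row player's payoff matrix `A'` of the type-two single column simulation.
It has `3k + nr` rows and `3k + nc` columns.  For `j < k` the block
`(rbʲ, cb₁ʲ) = ({3j,3j+1,3j+2}, {4j,4j+1,4j+2})` equals the identity `S`, the block
`(rbʲ, cb₂ʲ) = ({3j,3j+1,3j+2}, {4j+3})` is all ones, and the block `(rb_e, cb₁ʲ)`
equals `encode(A_j)`: the entry `2` of `A_j` (if present) becomes `1`s in the
second and third columns of its row, the first two `1`s of `A_j` are placed in the
first column, a third `1` in the second column, a fourth `1` in the third column.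
Columns `c ≥ 4k` restricted to `rb_e` equal columns `A_k, …, A_{nc-1}`; all other
entries are `0`. -/
noncomputable def scs2A (k : ℕ) (A : ℕ → ℕ → ℝ) : ℕ → ℕ → ℝ := fun r c =>
  if r < 3*k then
    (if c = 4*(r/3) + r % 3 ∨ c = 4*(r/3) + 3 then 1 else 0)
  else
    if c < 4*k then
      (if c % 4 = 0 then
        (if A (r - 3*k) (c/4) = 1 ∧ oneRank A (c/4) (r - 3*k) < 2 then 1 else 0)
       else if c % 4 = 1 then
        (if A (r - 3*k) (c/4) = 2 ∨ (A (r - 3*k) (c/4) = 1 ∧ oneRank A (c/4) (r - 3*k) = 2)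
         then 1 else 0)
       else if c % 4 = 2 then
        (if A (r - 3*k) (c/4) = 2 ∨ (A (r - 3*k) (c/4) = 1 ∧ oneRank A (c/4) (r - 3*k) = 3)
         then 1 else 0)
       else 0)
    else A (r - 3*k) (c - 3*k)

/-- The column player's payoff matrix `B'` of the type-two single column
simulation: for `j < k` the block `(rbʲ, cb₁ʲ)` equals `T = [[0,1,0],[0,0,1],[1,0,0]]`
and the block `(rb_e, cb₂ʲ)` equals column `B_j`; columns `c ≥ 4k` restricted to
`rb_e` equal columns `B_k, …, B_{nc-1}`; all other entries are `0`. -/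
noncomputable def scs2B (k : ℕ) (B : ℕ → ℕ → ℝ) : ℕ → ℕ → ℝ := fun r c =>
  if r < 3*k then (if c = 4*(r/3) + ((r % 3 + 1) % 3) then 1 else 0)
  else
    if c < 4*k then (if c % 4 = 3 then B (r - 3*k) (c/4) else 0)
    else B (r - 3*k) (c - 3*k)

lemma oneRank_lt (A : ℕ → ℕ → ℝ) (j : ℕ) {i i' : ℕ} (h : i < i') (hi : A i j = 1) :
    oneRank A j i < oneRank A j i' := by
  apply Finset.card_lt_card
  constructor
  · intro x hx
    simp only [mem_filter, mem_range] at hx ⊢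
    exact ⟨hx.1.trans h, hx.2⟩
  · intro hsub
    have hmem : i ∈ (range i').filter fun r' => A r' j = 1 := by
      simp [h, hi]
    have := hsub hmem
    simp at this

lemma oneRank_injOn (A : ℕ → ℕ → ℝ) (j : ℕ) {i i' : ℕ} (hi : A i j = 1)
    (hi' : A i' j = 1) (h : oneRank A j i = oneRank A j i') : i = i' := by
  rcases lt_trichotomy i i' with hlt | he | hlt
  · exact absurd h (Nat.ne_of_lt (oneRank_lt A j hlt hi))
  · exact he
  · exact absurd h.symm (Nat.ne_of_lt (oneRank_lt A j hlt hi'))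

lemma rank_count (A : ℕ → ℕ → ℝ) (j nr : ℕ) (P : ℕ → Prop) (s : Finset ℕ)
    (hP : ∀ m, P m → m ∈ s) :
    (((range nr).filter fun i => A i j = 1 ∧ P (oneRank A j i)).card) ≤ s.card := by
  apply Finset.card_le_card_of_injOn (oneRank A j)
  · intro i hi
    simp only [Finset.mem_coe, mem_filter] at hi
    exact hP _ hi.2.2
  · intro i hi i' hi' h
    simp only [coe_filter, Set.mem_setOf_eq] at hi hi'
    exact oneRank_injOn A j hi.2.1 hi'.2.1 h

lemma hi_card_le (N k' : ℕ) (p : ℕ → Prop) (Q : ℕ → Prop)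
    (h : ∀ r, k' ≤ r → r < k' + N → p r → Q (r - k')) :
    (((range (k'+N)).filter fun r => p r ∧ ¬ r < k').card) ≤ ((range N).filter Q).card := by
  apply Finset.card_le_card_of_injOn (fun r => r - k')
  · intro r hr
    simp only [Finset.mem_coe, mem_filter, mem_range] at hr ⊢
    exact ⟨by omega, h r (by omega) hr.1 hr.2.1⟩
  · intro r hr r' hr' hh
    simp only [coe_filter, Set.mem_setOf_eq, mem_range] at hr hr'
    have hh' : r - k' = r' - k' := hh
    omega


/-- If `(A, B)` is a stage 3 game satisfying the input assumptions of the type-two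
single column simulation, then every entry of `A'` lies in `{0,1}` and every row
and every column of `A'` contains at most three entries equal to `1`. -/
theorem stmt19 (n nr nc k : ℕ) (A B : ℕ → ℕ → ℝ)
    (hin : Scs2Input n nr nc k A B) :
    (∀ r < 3*k+nr, ∀ c < 3*k+nc, scs2A k A r c = 0 ∨ scs2A k A r c = 1) ∧
    (∀ r < 3*k+nr, ((range (3*k+nc)).filter fun c => scs2A k A r c = 1).card ≤ 3) ∧
    (∀ c < 3*k+nc, ((range (3*k+nr)).filter fun r => scs2A k A r c = 1).card ≤ 3) := by
  obtain ⟨hnr, hnc, hknc, ⟨hAcol, hArow, hBcol, hBrow⟩, hAbd, hBbd, _, _, _, _, hltk, hge⟩ := hin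
  refine ⟨?_, ?_, ?_⟩
  · -- entries in {0,1}
    intro r hr c hc
    simp only [scs2A]
    by_cases h1 : r < 3*k
    · rw [if_pos h1]; split <;> simp
    · rw [if_neg h1]
      by_cases h2 : c < 4*k
      · rw [if_pos h2]; split_ifs <;> simp
      · rw [if_neg h2]
        have hjk : k ≤ c - 3*k := by omega
        have hjn : c - 3*k < nc := by omega
        have hne2 := (hge _ hjk hjn).1 (r-3*k) (by omega)
        have hm := (hAcol _ hjn).1 (r-3*k) (by omega)
        simp only [Set.mem_insert_iff, Set.mem_singleton_iff] at hm
        rcases hm with h|h|h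
        · exact Or.inl h
        · exact Or.inr h
        · exact absurd h hne2
  · -- row counts
    intro r hr
    by_cases h1 : r < 3*k
    · calc ((range (3*k+nc)).filter fun c => scs2A k A r c = 1).card
          ≤ ({4*(r/3)+r%3, 4*(r/3)+3} : Finset ℕ).card := by
            apply Finset.card_le_card
            intro c hcm
            simp only [mem_filter, mem_range] at hcm
            have hc1 := hcm.2
            simp only [scs2A, if_pos h1] at hc1
            by_cases hcond : c = 4*(r/3)+r%3 ∨ c = 4*(r/3)+3
            · simpa [Finset.mem_insert, Finset.mem_singleton] using hcond
            · rw [if_neg hcond] at hc1; norm_num at hc1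
        _ ≤ 3 := by
            refine le_trans (Finset.card_insert_le _ _) ?_
            simp
    · set i := r - 3*k with hidef
      have hinr : i < nr := by omega
      set F := (range (3*k+nc)).filter fun c => scs2A k A r c = 1 with hF
      have hsplit := Finset.card_filter_add_card_filter_not
        (s := F) (p := fun c => c < 4*k ∧ A i (c/4) = 2)
      have hG2 : (F.filter fun c => c < 4*k ∧ A i (c/4) = 2).card
          ≤ ((range nc).filter fun j => A i j = 2).card * 2 := by
        have hc2 : (((range nc).filter fun j => A i j = 2) ×ˢ ({1,2} : Finset ℕ)).card
            = ((range nc).filter fun j => A i j = 2).card * 2 := by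
          rw [Finset.card_product]; rfl
        rw [← hc2]
        apply Finset.card_le_card_of_injOn (fun c => (c/4, c%4))
        · intro c hcm
          simp only [hF, Finset.mem_coe, mem_filter, mem_range] at hcm
          obtain ⟨⟨hcr, hc1⟩, hc4, hA2⟩ := hcm
          simp only [scs2A, if_neg h1, if_pos hc4, ← hidef] at hc1
          have hne : ¬(A i (c/4) = 1 ∧ oneRank A (c/4) i < 2) := by
            rintro ⟨h, -⟩; rw [hA2] at h; norm_num at h
          have hm4 : c % 4 = 1 ∨ c % 4 = 2 := by
            by_contra hmm
            push_neg at hmm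
            by_cases h0 : c % 4 = 0
            · rw [if_pos h0, if_neg hne] at hc1; norm_num at hc1
            · rw [if_neg h0, if_neg hmm.1, if_neg hmm.2] at hc1; norm_num at hc1
          simp only [Finset.mem_coe, Finset.mem_product, mem_filter, mem_range, Finset.mem_insert,
            Finset.mem_singleton]
          exact ⟨⟨by omega, hA2⟩, hm4⟩
        · intro c hc c' hc' hgc
          have h1' : c/4 = c'/4 := congrArg Prod.fst hgc
          have h2' : c%4 = c'%4 := congrArg Prod.snd hgc
          omega
      have hG13 : (F.filter fun c => ¬(c < 4*k ∧ A i (c/4) = 2)).card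
          ≤ ((range nc).filter fun j => A i j = 1).card := by
        have key : ∀ d, d < 3*k+nc → scs2A k A r d = 1 → ¬(d < 4*k ∧ A i (d/4) = 2) →
            d < 4*k →
            (d % 4 = 0 ∧ A i (d/4) = 1 ∧ oneRank A (d/4) i < 2) ∨
            (d % 4 = 1 ∧ A i (d/4) = 1 ∧ oneRank A (d/4) i = 2) ∨
            (d % 4 = 2 ∧ A i (d/4) = 1 ∧ oneRank A (d/4) i = 3) := by
          intro d hdr hd1 hdnot hd4
          simp only [scs2A, if_neg h1, if_pos hd4, ← hidef] at hd1
          have hA2 : A i (d/4) ≠ 2 := fun h => hdnot ⟨hd4, h⟩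
          by_cases h0 : d % 4 = 0
          · rw [if_pos h0] at hd1
            split_ifs at hd1 with hcond
            · exact Or.inl ⟨h0, hcond⟩
            · norm_num at hd1
          · rw [if_neg h0] at hd1
            by_cases hm1 : d % 4 = 1
            · rw [if_pos hm1] at hd1
              split_ifs at hd1 with hcond
              · rcases hcond with h|h
                · exact absurd h hA2
                · exact Or.inr (Or.inl ⟨hm1, h⟩)
              · norm_num at hd1
            · rw [if_neg hm1] at hd1
              by_cases hm2 : d % 4 = 2
              · rw [if_pos hm2] at hd1
                split_ifs at hd1 with hcond
                · rcases hcond with h|h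
                  · exact absurd h hA2
                  · exact Or.inr (Or.inr ⟨hm2, h⟩)
                · norm_num at hd1
              · rw [if_neg hm2] at hd1; norm_num at hd1
        apply Finset.card_le_card_of_injOn (fun c => if c < 4*k then c/4 else c - 3*k)
        · intro c hcm
          simp only [hF, Finset.mem_coe, mem_filter, mem_range] at hcm
          obtain ⟨⟨hcr, hc1⟩, hnot⟩ := hcm
          by_cases hc4 : c < 4*k
          · rcases key c hcr hc1 hnot hc4 with ⟨-, h, -⟩ | ⟨-, h, -⟩ | ⟨-, h, -⟩ <;>
            · simp only [Finset.mem_coe, if_pos hc4]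
              simp only [mem_filter, mem_range]
              exact ⟨by omega, h⟩
          · simp only [Finset.mem_coe, if_neg hc4]
            simp only [scs2A, if_neg h1, if_neg hc4, ← hidef] at hc1
            simp only [mem_filter, mem_range]
            exact ⟨by omega, hc1⟩
        · intro c hc c' hc' hgc
          simp only [hF, coe_filter, Set.mem_setOf_eq, mem_filter, mem_range] at hc hc'
          obtain ⟨⟨hcr, hc1⟩, hnot⟩ := hc
          obtain ⟨⟨hcr', hc1'⟩, hnot'⟩ := hc'
          have hgc : (if c < 4*k then c/4 else c - 3*k) = (if c' < 4*k then c'/4 else c' - 3*k) := hgc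
          by_cases hc4 : c < 4*k <;> by_cases hc4' : c' < 4*k
          · rw [if_pos hc4, if_pos hc4'] at hgc
            have hk1 := key c hcr hc1 hnot hc4
            have hk2 := key c' hcr' hc1' hnot' hc4'
            rw [hgc] at hk1
            omega
          · rw [if_pos hc4, if_neg hc4'] at hgc; omega
          · rw [if_neg hc4, if_pos hc4'] at hgc; omega
          · rw [if_neg hc4, if_neg hc4'] at hgc; omega
      rcases hArow i hinr with ⟨h01, hone⟩ | ⟨htwo, hone, -⟩
      · have hone' : ((range nc).filter fun j => A i j = 1).card ≤ 3 := hone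
        have ht0 : ((range nc).filter fun j => A i j = 2).card = 0 := by
          rw [Finset.card_eq_zero, Finset.filter_eq_empty_iff]
          intro j hj
          have h01' : A i j = 0 ∨ A i j = 1 := h01 j (mem_range.mp hj)
          rcases h01' with h|h <;> rw [h] <;> norm_num
        omega
      · have hone' : ((range nc).filter fun j => A i j = 1).card ≤ 1 := hone
        have htwo' : ((range nc).filter fun j => A i j = 2).card = 1 := htwo
        omega
  · -- column counts
    intro c hc
    set F := (range (3*k+nr)).filter fun r => scs2A k A r c = 1 with hF
    have hsplit := Finset.card_filter_add_card_filter_not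
      (s := F) (p := fun r => r < 3*k)
    have hlow : ∀ r, r ∈ F → r < 3*k → (c = 4*(r/3) + r%3 ∨ c = 4*(r/3)+3) := by
      intro r hrm hr3
      simp only [hF, mem_filter, mem_range] at hrm
      have hr1 := hrm.2
      simp only [scs2A, if_pos hr3] at hr1
      by_contra hcc
      rw [if_neg hcc] at hr1; norm_num at hr1
    by_cases hc4 : c < 4*k
    · have hjk : c/4 < k := by omega
      have hjnc : c/4 < nc := by omega
      have hhi : ∀ (Q : ℕ → Prop),
          (∀ r, 3*k ≤ r → r < 3*k + nr → scs2A k A r c = 1 → Q (r - 3*k)) →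
          (F.filter fun r => ¬ r < 3*k).card ≤ ((range nr).filter Q).card := by
        intro Q hQ
        rw [hF, Finset.filter_filter]
        exact hi_card_le nr (3*k) _ Q hQ
      by_cases hm3 : c % 4 = 3
      · -- low part ≤ 3, high part empty
        have hlo3 : (F.filter fun r => r < 3*k).card ≤ 3 := by
          have hsub : (F.filter fun r => r < 3*k) ⊆
              ({3*(c/4), 3*(c/4)+1, 3*(c/4)+2} : Finset ℕ) := by
            intro r hrm
            simp only [mem_filter] at hrm
            have := hlow r hrm.1 hrm.2
            simp only [Finset.mem_insert, Finset.mem_singleton]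
            omega
          refine (Finset.card_le_card hsub).trans ?_
          refine le_trans (Finset.card_insert_le _ _) ?_
          refine Nat.succ_le_succ (le_trans (Finset.card_insert_le _ _) ?_)
          simp
        have hhi0 := hhi (fun _ => False) (by
          intro r hr3 hrN hr1
          simp only [scs2A, if_neg (by omega : ¬ r < 3*k), if_pos hc4,
            if_neg (by omega : ¬ c % 4 = 0), if_neg (by omega : ¬ c % 4 = 1),
            if_neg (by omega : ¬ c % 4 = 2)] at hr1
          norm_num at hr1)
        have hhi0' : (F.filter fun r => ¬ r < 3*k).card ≤
            ((range nr).filter fun _ => False).card := by simpa using hhi0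
        simp only [Finset.filter_false, Finset.card_empty, Nat.le_zero] at hhi0'
        omega
      · -- m < 3 : low part ≤ 1
        have hlo1 : (F.filter fun r => r < 3*k).card ≤ 1 := by
          have hsub : (F.filter fun r => r < 3*k) ⊆ ({3*(c/4) + c%4} : Finset ℕ) := by
            intro r hrm
            simp only [mem_filter] at hrm
            have := hlow r hrm.1 hrm.2
            simp only [Finset.mem_singleton]
            omega
          exact (Finset.card_le_card hsub).trans (by simp)
        have hm4 : c % 4 = 0 ∨ c % 4 = 1 ∨ c % 4 = 2 := by omega
        have hcol := hAcol (c/4) hjnc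
        have htwo1 : ((range nr).filter fun i => A i (c/4) = 2).card ≤ 1 := hcol.2.2
        rcases hm4 with h0 | h1 | h2
        · have hq := hhi (fun i => A i (c/4) = 1 ∧ oneRank A (c/4) i < 2) (by
            intro r hr3 hrN hr1
            simp only [scs2A, if_neg (by omega : ¬ r < 3*k), if_pos hc4, if_pos h0] at hr1
            split_ifs at hr1 with hcond
            · exact hcond
            · norm_num at hr1)
          have hrk := rank_count A (c/4) nr (fun m => m < 2) (range 2)
            (by intro m hm; simpa using hm)
          simp only [Finset.card_range] at hrk
          have hq' : (F.filter fun r => ¬ r < 3*k).card ≤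
              ((range nr).filter fun i => A i (c/4) = 1 ∧ oneRank A (c/4) i < 2).card := by convert hq using 3
          have hrk' : ((range nr).filter fun i =>
              A i (c/4) = 1 ∧ oneRank A (c/4) i < 2).card ≤ 2 := by convert hrk using 3
          omega
        · have hq := hhi (fun i =>
              A i (c/4) = 2 ∨ (A i (c/4) = 1 ∧ oneRank A (c/4) i = 2)) (by
            intro r hr3 hrN hr1
            simp only [scs2A, if_neg (by omega : ¬ r < 3*k), if_pos hc4,
              if_neg (by omega : ¬ c % 4 = 0),
              if_pos h1] at hr1
            split_ifs at hr1 with hcond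
            · exact hcond
            · norm_num at hr1)
          have hsub : ((range nr).filter fun i =>
                A i (c/4) = 2 ∨ (A i (c/4) = 1 ∧ oneRank A (c/4) i = 2)) ⊆
              ((range nr).filter fun i => A i (c/4) = 2) ∪
              ((range nr).filter fun i => A i (c/4) = 1 ∧ oneRank A (c/4) i = 2) := by
            intro x hx
            simp only [mem_filter, Finset.mem_union] at hx ⊢
            tauto
          have hor := (Finset.card_le_card hsub).trans (Finset.card_union_le _ _)
          have hrk := rank_count A (c/4) nr (fun m => m = 2) ({2} : Finset ℕ)
            (by intro m hm; simpa using hm)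
          simp only [Finset.card_singleton] at hrk
          have hq' : (F.filter fun r => ¬ r < 3*k).card ≤
              ((range nr).filter fun i =>
                A i (c/4) = 2 ∨ (A i (c/4) = 1 ∧ oneRank A (c/4) i = 2)).card := by convert hq using 3
          have hrk' : ((range nr).filter fun i =>
              A i (c/4) = 1 ∧ oneRank A (c/4) i = 2).card ≤ 1 := by convert hrk using 3
          have htwo1' : ((range nr).filter fun i => A i (c/4) = 2).card ≤ 1 := htwo1
          omega
        · have hq := hhi (fun i =>
              A i (c/4) = 2 ∨ (A i (c/4) = 1 ∧ oneRank A (c/4) i = 3)) (by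
            intro r hr3 hrN hr1
            simp only [scs2A, if_neg (by omega : ¬ r < 3*k), if_pos hc4,
              if_neg (by omega : ¬ c % 4 = 0),
              if_neg (by omega : ¬ c % 4 = 1),
              if_pos h2] at hr1
            split_ifs at hr1 with hcond
            · exact hcond
            · norm_num at hr1)
          have hsub : ((range nr).filter fun i =>
                A i (c/4) = 2 ∨ (A i (c/4) = 1 ∧ oneRank A (c/4) i = 3)) ⊆
              ((range nr).filter fun i => A i (c/4) = 2) ∪
              ((range nr).filter fun i => A i (c/4) = 1 ∧ oneRank A (c/4) i = 3) := by
            intro x hx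
            simp only [mem_filter, Finset.mem_union] at hx ⊢
            tauto
          have hor := (Finset.card_le_card hsub).trans (Finset.card_union_le _ _)
          have hrk := rank_count A (c/4) nr (fun m => m = 3) ({3} : Finset ℕ)
            (by intro m hm; simpa using hm)
          simp only [Finset.card_singleton] at hrk
          have hq' : (F.filter fun r => ¬ r < 3*k).card ≤
              ((range nr).filter fun i =>
                A i (c/4) = 2 ∨ (A i (c/4) = 1 ∧ oneRank A (c/4) i = 3)).card := by convert hq using 3
          have hrk' : ((range nr).filter fun i =>
              A i (c/4) = 1 ∧ oneRank A (c/4) i = 3).card ≤ 1 := by convert hrk using 3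
          have htwo1' : ((range nr).filter fun i => A i (c/4) = 2).card ≤ 1 := htwo1
          omega
    · -- c ≥ 4k
      have hlo0 : (F.filter fun r => r < 3*k).card = 0 := by
        rw [Finset.card_eq_zero, Finset.filter_eq_empty_iff]
        intro r hrm hr3
        have := hlow r hrm hr3
        omega
      have hhiQ : (F.filter fun r => ¬ r < 3*k).card ≤
          ((range nr).filter fun i => A i (c - 3*k) = 1).card := by
        rw [hF, Finset.filter_filter]
        apply hi_card_le nr (3*k) _ _
        intro r hr3 hrN hr1
        simp only [scs2A, if_neg (by omega : ¬ r < 3*k), if_neg hc4] at hr1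
        exact hr1
      have h3 : ((range nr).filter fun i => A i (c - 3*k) = 1).card ≤ 3 :=
        (hge (c - 3*k) (by omega) (by omega)).2
      omega
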